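/- arXiv:1106.3453 — 2 statements merged into one kernel-verified Lean document; each statement's English description precedes it below -/
import Mathlib

section
/- For all integers m ≥ 3 and n ≥ 2, the locating chromatic number of K_m □ P_n satisfies χ_L(K_m □ P_n) ≤ m + 2. -/
open SimpleGraph

/-- The distance from a vertex to a set of vertices. -/
noncomputable def setDist {V : Type*} (G : SimpleGraph V) (v : V) (S : Set V) : ℕ :=
  sInf (G.dist v '' S)

/-- The color code of a vertex with respect to a `k`-coloring `c`:
the tuple of distances to the color classes. -/
noncomputable def colorCode {V : Type*} (G : SimpleGraph V) {k : ℕ} (c : V → Fin k)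
    (v : V) : Fin k → ℕ :=
  fun i => setDist G v (c ⁻¹' {i})

/-- `c` is a locating `k`-coloring of `G`: a proper coloring onto the `k` colors
such that distinct vertices have distinct color codes. -/
def IsLocatingColoring {V : Type*} (G : SimpleGraph V) {k : ℕ} (c : V → Fin k) : Prop :=
  Function.Surjective c ∧
  (∀ u v : V, G.Adj u v → c u ≠ c v) ∧
  Function.Injective (colorCode G c)

/-- The locating chromatic number: the least `k` admitting a locating `k`-coloring. -/
noncomputable def locatingChromaticNumber {V : Type*} (G : SimpleGraph V) : ℕ :=
  sInf {k : ℕ | ∃ c : V → Fin k, IsLocatingColoring G c}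

/-- A vertex is colorful w.r.t. a coloring `c` if every color appears in its
closed neighborhood. -/
def IsColorful {V : Type*} (G : SimpleGraph V) {k : ℕ} (c : V → Fin k) (v : V) : Prop :=
  ∀ i : Fin k, ∃ u : V, (u = v ∨ G.Adj v u) ∧ c u = i

/-! ### Auxiliary lemmas -/

lemma pot_le_walk_length {V : Type*} (G : SimpleGraph V) (φ : V → ℕ)
    (h : ∀ u v : V, G.Adj u v → φ u ≤ φ v + 1) {u t : V} (ht : φ t = 0)
    (w : G.Walk u t) : φ u ≤ w.length := by
  induction w with
  | nil => simp [ht]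
  | cons ha p ih =>
      have := h _ _ ha
      simp only [SimpleGraph.Walk.length_cons]
      omega

lemma dist_le_pot {V : Type*} (G : SimpleGraph V) (hc : G.Connected) (φ : V → ℕ) (t : V)
    (h0 : ∀ u, φ u = 0 → u = t)
    (hstep : ∀ u, φ u ≠ 0 → ∃ v, G.Adj u v ∧ φ v + 1 = φ u) :
    ∀ k u, φ u = k → G.dist u t ≤ k := by
  intro k
  induction k with
  | zero => intro u h; rw [h0 u h]; simp
  | succ k ih =>
      intro u h
      obtain ⟨v, hadj, hv⟩ := hstep u (by omega)
      have h1 : G.dist u v = 1 := SimpleGraph.dist_eq_one_iff_adj.2 hadj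
      have h2 := hc.dist_triangle (u := u) (v := v) (w := t)
      have h3 := ih v (by omega)
      omega

lemma dist_eq_pot {V : Type*} (G : SimpleGraph V) (hc : G.Connected) (φ : V → ℕ) (t : V)
    (ht : φ t = 0)
    (h0 : ∀ u, φ u = 0 → u = t)
    (hstep : ∀ u, φ u ≠ 0 → ∃ v, G.Adj u v ∧ φ v + 1 = φ u)
    (hlip : ∀ u v : V, G.Adj u v → φ u ≤ φ v + 1)
    (u : V) : G.dist u t = φ u := by
  have hle := dist_le_pot G hc φ t h0 hstep (φ u) u rfl
  obtain ⟨w, hw⟩ := (hc u t).exists_walk_length_eq_dist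
  have := pot_le_walk_length G φ hlip ht w
  omega

lemma setDist_singleton {V : Type*} (G : SimpleGraph V) (v x : V) :
    setDist G v {x} = G.dist v x := by
  simp [setDist]

lemma colorCode_self {V : Type*} (G : SimpleGraph V) {k : ℕ} (c : V → Fin k) (v : V) :
    colorCode G c v (c v) = 0 := by
  have hmem : G.dist v v ∈ G.dist v '' (c ⁻¹' {c v}) := ⟨v, by simp, rfl⟩
  have h := Nat.sInf_le hmem
  simp only [SimpleGraph.dist_self] at h
  simpa [colorCode, setDist] using Nat.le_zero.mp h

lemma colorCode_zero_imp {V : Type*} {G : SimpleGraph V} (hc : G.Connected) {k : ℕ}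
    {c : V → Fin k} {v : V} {i : Fin k} (hne : (c ⁻¹' {i}).Nonempty)
    (h : colorCode G c v i = 0) : c v = i := by
  simp only [colorCode, setDist] at h
  rcases (Nat.sInf_eq_zero.mp h) with h0 | hemp
  · obtain ⟨x, hx, hdx⟩ := h0
    have hvx : v = x := (hc.dist_eq_zero_iff).mp hdx
    subst hvx
    exact hx
  · exact absurd (Set.image_eq_empty.mp hemp) (Set.nonempty_iff_ne_empty.mp hne)

/-- The locating coloring of `K_m □ P_n` with `m + 2` colors. -/
def col (m n : ℕ) (hm : 3 ≤ m) (hn : 2 ≤ n) : Fin m × Fin n → Fin (m + 2) :=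
  fun p =>
    if p.1.val = 0 ∧ p.2.val = 0 then ⟨m, by omega⟩
    else if p.1.val = 0 ∧ p.2.val = n - 1 then ⟨m + 1, by omega⟩
    else ⟨(p.1.val + p.2.val) % m,
      by have := Nat.mod_lt (p.1.val + p.2.val) (show 0 < m by omega); omega⟩

lemma mod_cancel {m x y z : ℕ} (hx : x < m) (hy : y < m)
    (h : (x + z) % m = (y + z) % m) : x = y := by
  have h1 : x ≡ y [MOD m] := Nat.ModEq.add_right_cancel' z h
  exact h1.eq_of_lt_of_lt hx hy

lemma mod_succ_ne {m x : ℕ} (hm : 3 ≤ m) : (x % m) ≠ ((x + 1) % m) := by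
  intro h
  have h1 : x ≡ x + 1 [MOD m] := h
  have h2 : m ∣ (x + 1) - x := (Nat.modEq_iff_dvd' (by omega)).mp h1
  simp only [Nat.add_sub_cancel_left] at h2
  have := Nat.le_of_dvd (by omega) h2
  omega

/-- For `m ≥ 3` and `n ≥ 2`, `χ_L(K_m □ P_n) ≤ m + 2`. -/
theorem stmt8 (m n : ℕ) (hm : 3 ≤ m) (hn : 2 ≤ n) :
    locatingChromaticNumber ((⊤ : SimpleGraph (Fin m)) □ pathGraph n) ≤ m + 2 := by
  set G : SimpleGraph (Fin m × Fin n) := (⊤ : SimpleGraph (Fin m)) □ pathGraph n with hGdef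
  haveI : Nonempty (Fin m) := ⟨⟨0, by omega⟩⟩
  have hpc : (pathGraph n).Connected := by
    obtain ⟨n', rfl⟩ : ∃ n', n = n' + 1 := ⟨n - 1, by omega⟩
    exact pathGraph_connected n'
  have hc : G.Connected := SimpleGraph.Connected.boxProd SimpleGraph.connected_top hpc
  set c : Fin m × Fin n → Fin (m + 2) := col m n hm hn with hcdef
  have hm0 : 0 < m := by omega
  have hmodlt : ∀ x : ℕ, x % m < m := fun x => Nat.mod_lt x hm0
  -- value case analysis for `c`
  have hcol_spec : ∀ a : Fin m, ∀ b : Fin n,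
      (a.val = 0 ∧ b.val = 0 ∧ (c (a, b)).val = m) ∨
      (a.val = 0 ∧ b.val = n - 1 ∧ (c (a, b)).val = m + 1) ∨
      (¬(a.val = 0 ∧ b.val = 0) ∧ ¬(a.val = 0 ∧ b.val = n - 1) ∧
        (c (a, b)).val = (a.val + b.val) % m) := by
    intro a b
    simp only [hcdef, col]
    split_ifs with h1 h2
    · exact Or.inl ⟨h1.1, h1.2, rfl⟩
    · exact Or.inr (Or.inl ⟨h2.1, h2.2, rfl⟩)
    · exact Or.inr (Or.inr ⟨h1, h2, rfl⟩)
  set t1 : Fin m × Fin n := (⟨0, by omega⟩, ⟨0, by omega⟩) with ht1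
  set t2 : Fin m × Fin n := (⟨0, by omega⟩, ⟨n - 1, by omega⟩) with ht2
  have hct1 : c t1 = ⟨m, by omega⟩ := by
    simp only [ht1, hcdef, col]
    rw [if_pos (by simp)]
  have hct2 : c t2 = ⟨m + 1, by omega⟩ := by
    simp only [ht2, hcdef, col]
    rw [if_neg (by simp; omega), if_pos (by simp)]
  -- singleton color classes
  have hpre1 : c ⁻¹' {(⟨m, by omega⟩ : Fin (m + 2))} = {t1} := by
    ext ⟨a, b⟩
    constructor
    · intro h
      have hv : (c (a, b)).val = m := by
        have : c (a, b) = ⟨m, by omega⟩ := h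
        exact congrArg Fin.val this
      rcases hcol_spec a b with ⟨ha, hb, _⟩ | ⟨_, _, h1⟩ | ⟨_, _, h1⟩
      · show ((a, b) : Fin m × Fin n) = t1
        simp only [ht1, Prod.ext_iff, Fin.ext_iff]
        exact ⟨ha, hb⟩
      · omega
      · have := hmodlt (a.val + b.val); omega
    · intro h
      have h' : ((a, b) : Fin m × Fin n) = t1 := h
      simp only [Set.mem_preimage, h', hct1]
      rfl
  have hpre2 : c ⁻¹' {(⟨m + 1, by omega⟩ : Fin (m + 2))} = {t2} := by
    ext ⟨a, b⟩
    constructor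
    · intro h
      have hv : (c (a, b)).val = m + 1 := by
        have : c (a, b) = ⟨m + 1, by omega⟩ := h
        exact congrArg Fin.val this
      rcases hcol_spec a b with ⟨_, _, h1⟩ | ⟨ha, hb, _⟩ | ⟨_, _, h1⟩
      · omega
      · show ((a, b) : Fin m × Fin n) = t2
        simp only [ht2, Prod.ext_iff, Fin.ext_iff]
        exact ⟨ha, hb⟩
      · have := hmodlt (a.val + b.val); omega
    · intro h
      have h' : ((a, b) : Fin m × Fin n) = t2 := h
      simp only [Set.mem_preimage, h', hct2]
      rfl
  -- injectivity within a column
  have hcol_inj : ∀ (a a' : Fin m) (b : Fin n), c (a, b) = c (a', b) → a = a' := by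
    intro a a' b h
    have hv : (c (a, b)).val = (c (a', b)).val := congrArg Fin.val h
    have hma := hmodlt (a.val + b.val)
    have hma' := hmodlt (a'.val + b.val)
    rcases hcol_spec a b with ⟨ha, hb, h1⟩ | ⟨ha, hb, h1⟩ | ⟨ha, hb, h1⟩ <;>
      rcases hcol_spec a' b with ⟨ha', hb', h1'⟩ | ⟨ha', hb', h1'⟩ | ⟨ha', hb', h1'⟩ <;>
      first
        | (exact Fin.ext (by omega))
        | (exact absurd hv (by omega))
        | (exact Fin.ext (mod_cancel (z := b.val) a.isLt a'.isLt (by omega)))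
  -- proper coloring
  have hproper : ∀ u v : Fin m × Fin n, G.Adj u v → c u ≠ c v := by
    rintro ⟨a, b⟩ ⟨a', b'⟩ hadj heq
    rw [hGdef, boxProd_adj] at hadj
    rcases hadj with ⟨hA, hB⟩ | ⟨hP, hA⟩
    · simp only at hA hB
      subst hB
      exact (SimpleGraph.top_adj a a').mp hA (hcol_inj a a' b heq)
    · simp only at hA hP
      subst hA
      rw [pathGraph_adj] at hP
      have hv : (c (a, b)).val = (c (a, b')).val := congrArg Fin.val heq
      rcases hcol_spec a b with ⟨ha, hb, h1⟩ | ⟨ha, hb, h1⟩ | ⟨ha, hb, h1⟩ <;>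
        rcases hcol_spec a b' with ⟨ha', hb', h1'⟩ | ⟨ha', hb', h1'⟩ | ⟨ha', hb', h1'⟩
      · omega
      · omega
      · have := hmodlt (a.val + b'.val); omega
      · omega
      · omega
      · have := hmodlt (a.val + b'.val); omega
      · have := hmodlt (a.val + b.val); omega
      · have := hmodlt (a.val + b.val); omega
      · rcases hP with hP | hP
        · exact mod_succ_ne hm (by rw [show a.val + b.val + 1 = a.val + b'.val by omega]; omega)
        · exact mod_succ_ne hm (by rw [show a.val + b'.val + 1 = a.val + b.val by omega]; omega)
  -- surjectivity
  have hsurj : Function.Surjective c := by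
    intro k
    rcases Nat.lt_or_ge k.val m with hk | hk
    · by_cases hk0 : k.val = 0
      · refine ⟨(⟨m - 1, by omega⟩, ⟨1, by omega⟩), Fin.ext ?_⟩
        rcases hcol_spec ⟨m - 1, by omega⟩ ⟨1, by omega⟩ with ⟨ha, _, _⟩ | ⟨ha, _, _⟩ |
            ⟨_, _, hv⟩
        · exact absurd ha (by simp; omega)
        · exact absurd ha (by simp; omega)
        · rw [hv]
          show (m - 1 + 1) % m = k.val
          rw [show m - 1 + 1 = m by omega, Nat.mod_self]
          omega
      · refine ⟨(⟨k.val, hk⟩, ⟨0, by omega⟩), Fin.ext ?_⟩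
        rcases hcol_spec ⟨k.val, hk⟩ ⟨0, by omega⟩ with ⟨ha, _, _⟩ | ⟨ha, _, _⟩ | ⟨_, _, hv⟩
        · exact absurd ha hk0
        · exact absurd ha hk0
        · rw [hv]
          show (k.val + 0) % m = k.val
          rw [Nat.add_zero, Nat.mod_eq_of_lt hk]
    · by_cases hk1 : k.val = m
      · exact ⟨t1, by rw [hct1]; exact Fin.ext (by simp; omega)⟩
      · have : k.val = m + 1 := by have := k.isLt; omega
        exact ⟨t2, by rw [hct2]; exact Fin.ext (by simp; omega)⟩
  -- distance formulas
  have hφ1 : ∀ u : Fin m × Fin n,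
      G.dist u t1 = u.2.val + (if u.1.val = 0 then 0 else 1) := by
    intro u
    apply dist_eq_pot G hc (fun p => p.2.val + (if p.1.val = 0 then 0 else 1)) t1
    · simp [ht1]
    · rintro ⟨a, b⟩ h
      dsimp only at h
      by_cases ha : a.val = 0
      · rw [if_pos ha] at h
        exact Prod.ext (Fin.ext (by simp [ht1]; omega)) (Fin.ext (by simp [ht1]; omega))
      · rw [if_neg ha] at h
        omega
    · rintro ⟨a, b⟩ h
      dsimp only at h
      by_cases hb : b.val = 0
      · have ha : a.val ≠ 0 := by intro ha; simp [ha, hb] at h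
        refine ⟨(⟨0, by omega⟩, b), ?_, ?_⟩
        · rw [hGdef, boxProd_adj]
          exact Or.inl ⟨(SimpleGraph.top_adj _ _).mpr (by simp [Fin.ext_iff]; omega), rfl⟩
        · have h0 : ((⟨0, by omega⟩ : Fin m)).val = 0 := rfl
          dsimp only
          split_ifs <;> omega
      · refine ⟨(a, ⟨b.val - 1, by omega⟩), ?_, ?_⟩
        · rw [hGdef, boxProd_adj]
          exact Or.inr ⟨pathGraph_adj.mpr (Or.inr (by simp; omega)), rfl⟩
        · dsimp only
          split_ifs <;> omega
    · rintro ⟨a, b⟩ ⟨a', b'⟩ hadj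
      rw [hGdef, boxProd_adj] at hadj
      rcases hadj with ⟨hA, hB⟩ | ⟨hP, hA⟩
      · have hB' : b.val = b'.val := congrArg Fin.val hB
        show b.val + (if a.val = 0 then 0 else 1) ≤ b'.val + (if a'.val = 0 then 0 else 1) + 1
        split_ifs <;> omega
      · have hA' : a.val = a'.val := congrArg Fin.val hA
        rw [pathGraph_adj] at hP
        have hP' : b.val + 1 = b'.val ∨ b'.val + 1 = b.val := hP
        show b.val + (if a.val = 0 then 0 else 1) ≤ b'.val + (if a'.val = 0 then 0 else 1) + 1
        rcases hP' with hP' | hP'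
 <;> split_ifs <;> omega
  have hφ2 : ∀ u : Fin m × Fin n,
      G.dist u t2 = (n - 1 - u.2.val) + (if u.1.val = 0 then 0 else 1) := by
    intro u
    apply dist_eq_pot G hc (fun p => (n - 1 - p.2.val) + (if p.1.val = 0 then 0 else 1)) t2
    · simp [ht2]
    · rintro ⟨a, b⟩ h
      dsimp only at h
      have hblt := b.isLt
      by_cases ha : a.val = 0
      · rw [if_pos ha] at h
        exact Prod.ext (Fin.ext (by simp [ht2]; omega)) (Fin.ext (by simp [ht2]; omega))
      · rw [if_neg ha] at h
        omega
    · rintro ⟨a, b⟩ h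
      dsimp only at h
      have hblt := b.isLt
      by_cases hb : b.val = n - 1
      · have ha : a.val ≠ 0 := by intro ha; simp [ha, hb] at h
        refine ⟨(⟨0, by omega⟩, b), ?_, ?_⟩
        · rw [hGdef, boxProd_adj]
          exact Or.inl ⟨(SimpleGraph.top_adj _ _).mpr (by simp [Fin.ext_iff]; omega), rfl⟩
        · have h0 : ((⟨0, by omega⟩ : Fin m)).val = 0 := rfl
          dsimp only
          split_ifs <;> omega
      · refine ⟨(a, ⟨b.val + 1, by omega⟩), ?_, ?_⟩
        · rw [hGdef, boxProd_adj]
          exact Or.inr ⟨pathGraph_adj.mpr (Or.inl (by simp)), rfl⟩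
        · dsimp only
          split_ifs <;> omega
    · rintro ⟨a, b⟩ ⟨a', b'⟩ hadj
      rw [hGdef, boxProd_adj] at hadj
      rcases hadj with ⟨hA, hB⟩ | ⟨hP, hA⟩
      · have hB' : b.val = b'.val := congrArg Fin.val hB
        show (n - 1 - b.val) + (if a.val = 0 then 0 else 1) ≤
          (n - 1 - b'.val) + (if a'.val = 0 then 0 else 1) + 1
        split_ifs <;> omega
      · have hA' : a.val = a'.val := congrArg Fin.val hA
        rw [pathGraph_adj] at hP
        have hP' : b.val + 1 = b'.val ∨ b'.val + 1 = b.val := hP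
        have := b.isLt; have := b'.isLt
        show (n - 1 - b.val) + (if a.val = 0 then 0 else 1) ≤
          (n - 1 - b'.val) + (if a'.val = 0 then 0 else 1) + 1
        rcases hP' with hP' | hP'
 <;> split_ifs <;> omega
  -- injectivity of the color code
  have hinj : Function.Injective (colorCode G c) := by
    intro u v h
    have hcuv : c u = c v := by
      have h1 : colorCode G c v (c u) = 0 := by
        rw [← congrFun h (c u)]; exact colorCode_self G c u
      exact (colorCode_zero_imp hc ⟨u, rfl⟩ h1).symm
    have e1 : G.dist u t1 = G.dist v t1 := by
      have h1 := congrFun h ⟨m, by omega⟩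
      simpa only [colorCode, hpre1, setDist_singleton] using h1
    have e2 : G.dist u t2 = G.dist v t2 := by
      have h2 := congrFun h ⟨m + 1, by omega⟩
      simpa only [colorCode, hpre2, setDist_singleton] using h2
    rw [hφ1 u, hφ1 v] at e1
    rw [hφ2 u, hφ2 v] at e2
    rcases u with ⟨a, b⟩
    rcases v with ⟨a', b'⟩
    simp only at e1 e2
    have hblt := b.isLt
    have hblt' := b'.isLt
    have hbb : b = b' := by
      apply Fin.ext
      by_cases ha : a.val = 0 <;> by_cases ha' : a'.val = 0 <;>
        simp only [ha, ha', if_pos, if_neg, if_true, if_false] at e1 e2 <;> omega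
    subst hbb
    have haa : a = a' := hcol_inj a a' b hcuv
    rw [haa]
  -- conclude
  apply Nat.sInf_le
  exact ⟨c, hsurj, hproper, hinj⟩
end

section
/- Let m ≥ 3 and n ≥ 2 be integers. If K_m □ P_n admits a locating (m+1)-coloring, then n ≤ m + 1. -/
open SimpleGraph

/-- walk in pathGraph of length j - i -/
lemma pg_walk_exists (n : ℕ) : ∀ (k : ℕ) (i j : Fin n), (j : ℕ) - (i : ℕ) = k → (i:ℕ) ≤ j →
    ∃ w : (pathGraph n).Walk i j, w.length = k := by
  intro k
  induction k with
  | zero => intro i j h hle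
            have : i = j := Fin.ext (le_antisymm hle (by omega))
            subst this; exact ⟨Walk.nil, rfl⟩
  | succ k ih =>
    intro i j h hle
    have hi1 : (i:ℕ) + 1 < n := by have := j.isLt; omega
    let i' : Fin n := ⟨(i:ℕ)+1, hi1⟩
    have hadj : (pathGraph n).Adj i i' := by
      rw [pathGraph_adj]; left; rfl
    obtain ⟨w, hw⟩ := ih i' j (by simp [i']; omega) (by simp [i']; omega)
    exact ⟨Walk.cons hadj w, by simp [hw]⟩

lemma pg_walk (n : ℕ) (i j : Fin n) :
    ∃ w : (pathGraph n).Walk i j, w.length = Nat.dist i j := by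
  rcases le_total (i:ℕ) (j:ℕ) with h | h
  · obtain ⟨w, hw⟩ := pg_walk_exists n ((j:ℕ) - i) i j rfl h
    exact ⟨w, by rw [hw, Nat.dist_eq_sub_of_le h]⟩
  · obtain ⟨w, hw⟩ := pg_walk_exists n ((i:ℕ) - j) j i rfl h
    exact ⟨w.reverse, by rw [Walk.length_reverse, hw, Nat.dist_eq_sub_of_le_right h]⟩

variable {m n : ℕ}

lemma walk_lb {m n : ℕ} {x y : Fin m × Fin n}
    (w : ((⊤ : SimpleGraph (Fin m)) □ pathGraph n).Walk x y) :
    Nat.dist x.2 y.2 + (if x.1 = y.1 then 0 else 1) ≤ w.length := by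
  induction w with
  | nil => simp [Nat.dist_self]
  | @cons x z y h w ih =>
    rw [boxProd_adj] at h
    rcases h with ⟨h1, h2⟩ | ⟨h1, h2⟩
    · -- row move, columns equal
      have hd : Nat.dist (x.2 : ℕ) (y.2 : ℕ) = Nat.dist (z.2 : ℕ) (y.2 : ℕ) := by rw [h2]
      have : Nat.dist (z.2:ℕ) (y.2:ℕ) ≤ w.length := le_trans (Nat.le_add_right _ _) ih
      simp only [Walk.length_cons]
      split <;> omega
    · -- column move, rows equal
      have hadj : Nat.dist (x.2 : ℕ) (z.2 : ℕ) = 1 := by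
        rw [pathGraph_adj] at h1
        rcases h1 with h1 | h1 <;> simp [Nat.dist] <;> omega
      have htri : Nat.dist (x.2:ℕ) (y.2:ℕ) ≤ Nat.dist (x.2:ℕ) (z.2:ℕ) + Nat.dist (z.2:ℕ) (y.2:ℕ) :=
        Nat.dist.triangle_inequality _ _ _
      have h2' : (if x.1 = y.1 then 0 else 1) = (if z.1 = y.1 then 0 else 1) := by rw [h2]
      simp only [Walk.length_cons]
      omega

lemma prod_dist (m n : ℕ) (a b : Fin m) (i j : Fin n) :
    ((⊤ : SimpleGraph (Fin m)) □ pathGraph n).dist (a, i) (b, j)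
      = Nat.dist i j + (if a = b then 0 else 1) := by
  -- construct a walk of the right length
  obtain ⟨w1, hw1⟩ := pg_walk n i j
  let wcol : ((⊤ : SimpleGraph (Fin m)) □ pathGraph n).Walk (a, i) (a, j) :=
    Walk.boxProdRight _ a w1
  have hwcol : wcol.length = Nat.dist i j := by
    simp only [wcol, Walk.boxProdRight, Walk.length_map]; exact Eq.trans (Walk.length_map ..) hw1
  by_cases hab : a = b
  · subst hab
    have hle := SimpleGraph.dist_le wcol
    have hreach : ((⊤ : SimpleGraph (Fin m)) □ pathGraph n).Reachable (a, i) (a, j) := ⟨wcol⟩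
    obtain ⟨w, hw⟩ := hreach.exists_walk_length_eq_dist
    have := walk_lb w
    simp only [if_pos rfl] at this ⊢
    omega
  · have hadj : ((⊤ : SimpleGraph (Fin m)) □ pathGraph n).Adj (a, j) (b, j) := by
      rw [boxProd_adj]; left; exact ⟨by simpa using hab, rfl⟩
    let wfull := wcol.append (Walk.cons hadj Walk.nil)
    have hlen : wfull.length = Nat.dist i j + 1 := by
      simp only [wfull, Walk.length_append, Walk.length_cons, Walk.length_nil, hwcol]
    have hle := SimpleGraph.dist_le wfull
    have hreach : ((⊤ : SimpleGraph (Fin m)) □ pathGraph n).Reachable (a, i) (b, j) := ⟨wfull⟩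
    obtain ⟨w, hw⟩ := hreach.exists_walk_length_eq_dist
    have := walk_lb w
    simp only [if_neg hab] at this ⊢
    omega
section SetDistLemmas

lemma setDist_le' {V : Type*} (G : SimpleGraph V) {v u : V} {S : Set V} (hu : u ∈ S) :
    setDist G v S ≤ G.dist v u :=
  Nat.sInf_le ⟨u, hu, rfl⟩

lemma le_setDist' {V : Type*} (G : SimpleGraph V) {v : V} {S : Set V} {k : ℕ}
    (hS : S.Nonempty) (h : ∀ u ∈ S, k ≤ G.dist v u) : k ≤ setDist G v S :=
  le_csInf (hS.image _) (by rintro x ⟨u, hu, rfl⟩; exact h u hu)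

end SetDistLemmas

section Main

variable {m n : ℕ} {c : Fin m × Fin n → Fin (m + 1)} {μ : Fin n → Fin (m + 1)}

/-- vertices in the same column of the box product are adjacent -/
lemma col_adj {a b : Fin m} {j : Fin n} (hab : a ≠ b) :
    ((⊤ : SimpleGraph (Fin m)) □ pathGraph n).Adj (a, j) (b, j) := by
  rw [SimpleGraph.boxProd_adj]; left; exact ⟨by simpa using hab, rfl⟩

lemma col_inj (hprop : ∀ u v, ((⊤ : SimpleGraph (Fin m)) □ pathGraph n).Adj u v → c u ≠ c v)
    {a b : Fin m} {j : Fin n} (h : c (a, j) = c (b, j)) : a = b := by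
  by_contra hab
  exact hprop _ _ (col_adj hab) h

/-- each column misses some color -/
lemma exists_missing (hprop : ∀ u v, ((⊤ : SimpleGraph (Fin m)) □ pathGraph n).Adj u v → c u ≠ c v)
    (j : Fin n) : ∃ i, ∀ a, c (a, j) ≠ i := by
  by_contra hcon
  push_neg at hcon
  have hsurj : Function.Surjective (fun a => c (a, j)) := by
    intro i; obtain ⟨a, ha⟩ := hcon i; exact ⟨a, ha⟩
  have := Fintype.card_le_of_surjective _ hsurj
  simp only [Fintype.card_fin] at this
  omega

/-- every non-missing color occurs in the column -/
lemma occurs_of_ne_missing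
    (hprop : ∀ u v, ((⊤ : SimpleGraph (Fin m)) □ pathGraph n).Adj u v → c u ≠ c v)
    (hμ1 : ∀ (j : Fin n) (a : Fin m), c (a, j) ≠ μ j)
    {j : Fin n} {i : Fin (m + 1)} (hi : i ≠ μ j) : ∃ a, c (a, j) = i := by
  by_contra hcon
  push_neg at hcon
  classical
  set s : Finset (Fin (m + 1)) := Finset.image (fun a => c (a, j)) Finset.univ with hs
  have hcard : s.card = m := by
    rw [hs, Finset.card_image_of_injective _ (fun a b hab => col_inj hprop hab), Finset.card_univ,
      Fintype.card_fin]
  have hsub : s ⊆ (Finset.univ : Finset (Fin (m + 1))) \ {μ j, i} := by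
    intro x hx
    rw [hs] at hx
    obtain ⟨a, _, rfl⟩ := Finset.mem_image.mp hx
    simp only [Finset.mem_sdiff, Finset.mem_univ, true_and, Finset.mem_insert,
      Finset.mem_singleton]
    push_neg
    exact ⟨hμ1 j a, hcon a⟩
  have hcard2 : ((Finset.univ : Finset (Fin (m + 1))) \ {μ j, i}).card = m + 1 - 2 := by
    rw [Finset.card_sdiff_of_subset (by intro x _; exact Finset.mem_univ x)]
    rw [Finset.card_univ, Fintype.card_fin]
    congr 1
    rw [Finset.card_insert_of_notMem (by simpa using (Ne.symm hi)), Finset.card_singleton]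
  have := Finset.card_le_card hsub
  omega

/-- class nonempty -/
lemma class_nonempty (hsurj : Function.Surjective c) (i : Fin (m + 1)) :
    (c ⁻¹' {i}).Nonempty := by
  obtain ⟨v, hv⟩ := hsurj i; exact ⟨v, hv⟩

lemma sd_zero (hsurj : Function.Surjective c) {v : Fin m × Fin n} {i : Fin (m + 1)}
    (h : c v = i) : setDist ((⊤ : SimpleGraph (Fin m)) □ pathGraph n) v (c ⁻¹' {i}) = 0 :=
  Nat.eq_zero_of_le_zero (le_trans (setDist_le' _ (by exact h)) (by rw [SimpleGraph.dist_self]))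

lemma sd_pos (hsurj : Function.Surjective c) {v : Fin m × Fin n} {i : Fin (m + 1)}
    (h : c v ≠ i) : 1 ≤ setDist ((⊤ : SimpleGraph (Fin m)) □ pathGraph n) v (c ⁻¹' {i}) := by
  apply le_setDist' _ (class_nonempty hsurj i)
  rintro ⟨b, o⟩ hu
  obtain ⟨a, j⟩ := v
  rw [prod_dist]
  have : ¬ (a = b ∧ j = o) := by
    rintro ⟨rfl, rfl⟩; exact h hu
  by_cases hab : a = b
  · have : j ≠ o := fun hjo => this ⟨hab, hjo⟩
    have : (j : ℕ) ≠ (o : ℕ) := fun hh => this (Fin.ext hh)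
    have := Nat.dist_pos_of_ne this
    omega
  · simp only [if_neg hab]; omega

lemma sd_one (hprop : ∀ u v, ((⊤ : SimpleGraph (Fin m)) □ pathGraph n).Adj u v → c u ≠ c v)
    (hsurj : Function.Surjective c)
    (hμ1 : ∀ (j : Fin n) (a : Fin m), c (a, j) ≠ μ j)
    {a : Fin m} {j : Fin n} {i : Fin (m + 1)} (hiμ : i ≠ μ j) (hic : i ≠ c (a, j)) :
    setDist ((⊤ : SimpleGraph (Fin m)) □ pathGraph n) (a, j) (c ⁻¹' {i}) = 1 := by
  obtain ⟨b, hb⟩ := occurs_of_ne_missing hprop hμ1 hiμ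
  have hab : a ≠ b := by rintro rfl; exact hic hb.symm
  apply le_antisymm
  · refine le_trans (setDist_le' _ (by exact hb)) ?_
    rw [prod_dist, Nat.dist_self, if_neg hab]
  · exact sd_pos hsurj (fun hh => hic hh.symm)

/-- KEY collision lemma: same color, same missing color, same distance to the
missing class forces equality. -/
lemma key1 (hprop : ∀ u v, ((⊤ : SimpleGraph (Fin m)) □ pathGraph n).Adj u v → c u ≠ c v)
    (hsurj : Function.Surjective c)
    (hinj : Function.Injective (colorCode ((⊤ : SimpleGraph (Fin m)) □ pathGraph n) c))
    (hμ1 : ∀ (j : Fin n) (a : Fin m), c (a, j) ≠ μ j)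
    {a b : Fin m} {j j' : Fin n}
    (hc : c (a, j) = c (b, j')) (hμ : μ j = μ j')
    (hd : setDist ((⊤ : SimpleGraph (Fin m)) □ pathGraph n) (a, j) (c ⁻¹' {μ j})
        = setDist ((⊤ : SimpleGraph (Fin m)) □ pathGraph n) (b, j') (c ⁻¹' {μ j})) :
    (a, j) = (b, j') := by
  apply hinj
  funext i
  show setDist _ _ (c ⁻¹' {i}) = setDist _ _ (c ⁻¹' {i})
  by_cases h1 : i = c (a, j)
  · rw [sd_zero hsurj h1.symm, sd_zero hsurj (h1 ▸ hc).symm]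
  · by_cases h2 : i = μ j
    · subst h2; rw [hd]
    · rw [sd_one hprop hsurj hμ1 h2 h1,
        sd_one hprop hsurj hμ1 (hμ ▸ h2) (fun hh => h1 (hh.trans hc.symm))]

/-- KEY dominant-vertex lemma: two vertices with the same color both at distance 1
from their missing class are equal. -/
lemma key2 (hprop : ∀ u v, ((⊤ : SimpleGraph (Fin m)) □ pathGraph n).Adj u v → c u ≠ c v)
    (hsurj : Function.Surjective c)
    (hinj : Function.Injective (colorCode ((⊤ : SimpleGraph (Fin m)) □ pathGraph n) c))
    (hμ1 : ∀ (j : Fin n) (a : Fin m), c (a, j) ≠ μ j)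
    {a b : Fin m} {j j' : Fin n}
    (hc : c (a, j) = c (b, j'))
    (h1 : setDist ((⊤ : SimpleGraph (Fin m)) □ pathGraph n) (a, j) (c ⁻¹' {μ j}) = 1)
    (h1' : setDist ((⊤ : SimpleGraph (Fin m)) □ pathGraph n) (b, j') (c ⁻¹' {μ j'}) = 1) :
    (a, j) = (b, j') := by
  apply hinj
  funext i
  show setDist _ _ (c ⁻¹' {i}) = setDist _ _ (c ⁻¹' {i})
  by_cases hg : i = c (a, j)
  · rw [sd_zero hsurj hg.symm, sd_zero hsurj (hg ▸ hc).symm]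
  · have hL : setDist ((⊤ : SimpleGraph (Fin m)) □ pathGraph n) (a, j) (c ⁻¹' {i}) = 1 := by
      by_cases h2 : i = μ j
      · rw [h2]; exact h1
      · exact sd_one hprop hsurj hμ1 h2 hg
    have hR : setDist ((⊤ : SimpleGraph (Fin m)) □ pathGraph n) (b, j') (c ⁻¹' {i}) = 1 := by
      by_cases h2 : i = μ j'
      · rw [h2]; exact h1'
      · exact sd_one hprop hsurj hμ1 h2 (fun hh => hg (hh.trans hc.symm))
    rw [hL, hR]

/-- Case A distance computation: all occurrences of `μ₀` are in columns `≥ qq`,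
and `bstar` is the row of the occurrence in column `qq`. -/
lemma runA (hprop : ∀ u v, ((⊤ : SimpleGraph (Fin m)) □ pathGraph n).Adj u v → c u ≠ c v)
    {μ₀ : Fin (m + 1)} {bstar : Fin m} {qq : Fin n}
    (hb : c (bstar, qq) = μ₀)
    (hocc : ∀ (b : Fin m) (o : Fin n), c (b, o) = μ₀ → (qq : ℕ) ≤ (o : ℕ))
    {a : Fin m} {j : Fin n} (hj : (j : ℕ) < (qq : ℕ)) :
    setDist ((⊤ : SimpleGraph (Fin m)) □ pathGraph n) (a, j) (c ⁻¹' {μ₀})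
      = ((qq : ℕ) - (j : ℕ)) + (if a = bstar then 0 else 1) := by
  apply le_antisymm
  · refine le_trans (setDist_le' _ (by exact hb)) ?_
    rw [prod_dist, Nat.dist_eq_sub_of_le (le_of_lt hj)]
  · apply le_setDist' _ ⟨(bstar, qq), hb⟩
    rintro ⟨b, o⟩ hu
    have ho : (qq : ℕ) ≤ (o : ℕ) := hocc b o hu
    rw [prod_dist, Nat.dist_eq_sub_of_le (by omega : (j : ℕ) ≤ (o : ℕ))]
    by_cases hab : a = bstar
    · rw [if_pos hab]; split_ifs <;> omega
    · rw [if_neg hab]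
      by_cases hoq : (o : ℕ) = (qq : ℕ)
      · have hoq' : o = qq := Fin.ext hoq
        subst hoq'
        have hbb : b = bstar := col_inj hprop (hu.trans hb.symm)
        rw [if_neg (fun hh => hab (hh.trans hbb))]
      · split_ifs <;> omega

/-- Case B distance computation (mirror of `runA`). -/
lemma runB (hprop : ∀ u v, ((⊤ : SimpleGraph (Fin m)) □ pathGraph n).Adj u v → c u ≠ c v)
    {μ₀ : Fin (m + 1)} {bstar : Fin m} {pp : Fin n}
    (hb : c (bstar, pp) = μ₀)
    (hocc : ∀ (b : Fin m) (o : Fin n), c (b, o) = μ₀ → (o : ℕ) ≤ (pp : ℕ))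
    {a : Fin m} {j : Fin n} (hj : (pp : ℕ) < (j : ℕ)) :
    setDist ((⊤ : SimpleGraph (Fin m)) □ pathGraph n) (a, j) (c ⁻¹' {μ₀})
      = ((j : ℕ) - (pp : ℕ)) + (if a = bstar then 0 else 1) := by
  apply le_antisymm
  · refine le_trans (setDist_le' _ (by exact hb)) ?_
    rw [prod_dist, Nat.dist_eq_sub_of_le_right (le_of_lt hj)]
  · apply le_setDist' _ ⟨(bstar, pp), hb⟩
    rintro ⟨b, o⟩ hu
    have ho : (o : ℕ) ≤ (pp : ℕ) := hocc b o hu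
    rw [prod_dist, Nat.dist_eq_sub_of_le_right (by omega : (o : ℕ) ≤ (j : ℕ))]
    by_cases hab : a = bstar
    · rw [if_pos hab]; split_ifs <;> omega
    · rw [if_neg hab]
      by_cases hoq : (o : ℕ) = (pp : ℕ)
      · have hoq' : o = pp := Fin.ext hoq
        subst hoq'
        have hbb : b = bstar := col_inj hprop (hu.trans hb.symm)
        rw [if_neg (fun hh => hab (hh.trans hbb))]
      · split_ifs <;> omega

/-- Case C distance computation, left side: occurrences only in columns `≤ pp` or `≥ qq`,
`j = pp + 1` and `j + 2 ≤ qq`. -/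
lemma runC1 (hprop : ∀ u v, ((⊤ : SimpleGraph (Fin m)) □ pathGraph n).Adj u v → c u ≠ c v)
    {μ₀ : Fin (m + 1)} {bL : Fin m} {pp qq : Fin n}
    (hb : c (bL, pp) = μ₀)
    (hocc : ∀ (b : Fin m) (o : Fin n), c (b, o) = μ₀ → (o : ℕ) ≤ (pp : ℕ) ∨ (qq : ℕ) ≤ (o : ℕ))
    {a : Fin m} {j : Fin n} (hj : (j : ℕ) = (pp : ℕ) + 1) (hgap : (j : ℕ) + 2 ≤ (qq : ℕ)) :
    setDist ((⊤ : SimpleGraph (Fin m)) □ pathGraph n) (a, j) (c ⁻¹' {μ₀})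
      = 1 + (if a = bL then 0 else 1) := by
  apply le_antisymm
  · refine le_trans (setDist_le' _ (by exact hb)) ?_
    rw [prod_dist, Nat.dist_eq_sub_of_le_right (by omega : (pp : ℕ) ≤ (j : ℕ))]
    split_ifs <;> omega
  · apply le_setDist' _ ⟨(bL, pp), hb⟩
    rintro ⟨b, o⟩ hu
    rcases hocc b o hu with ho | ho
    · rw [prod_dist, Nat.dist_eq_sub_of_le_right (by omega : (o : ℕ) ≤ (j : ℕ))]
      by_cases hab : a = bL
      · rw [if_pos hab]; split_ifs <;> omega
      · rw [if_neg hab]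
        by_cases hoq : (o : ℕ) = (pp : ℕ)
        · have hoq' : o = pp := Fin.ext hoq
          subst hoq'
          have hbb : b = bL := col_inj hprop (hu.trans hb.symm)
          rw [if_neg (fun hh => hab (hh.trans hbb))]
          omega
        · split_ifs <;> omega
    · rw [prod_dist, Nat.dist_eq_sub_of_le (by omega : (j : ℕ) ≤ (o : ℕ))]
      split_ifs <;> omega

/-- Case C distance computation, right side. -/
lemma runC2 (hprop : ∀ u v, ((⊤ : SimpleGraph (Fin m)) □ pathGraph n).Adj u v → c u ≠ c v)
    {μ₀ : Fin (m + 1)} {bR : Fin m} {pp qq : Fin n}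
    (hb : c (bR, qq) = μ₀)
    (hocc : ∀ (b : Fin m) (o : Fin n), c (b, o) = μ₀ → (o : ℕ) ≤ (pp : ℕ) ∨ (qq : ℕ) ≤ (o : ℕ))
    {a : Fin m} {j : Fin n} (hj : (j : ℕ) + 1 = (qq : ℕ)) (hgap : (pp : ℕ) + 2 ≤ (j : ℕ)) :
    setDist ((⊤ : SimpleGraph (Fin m)) □ pathGraph n) (a, j) (c ⁻¹' {μ₀})
      = 1 + (if a = bR then 0 else 1) := by
  apply le_antisymm
  · refine le_trans (setDist_le' _ (by exact hb)) ?_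
    rw [prod_dist, Nat.dist_eq_sub_of_le (by omega : (j : ℕ) ≤ (qq : ℕ))]
    split_ifs <;> omega
  · apply le_setDist' _ ⟨(bR, qq), hb⟩
    rintro ⟨b, o⟩ hu
    rcases hocc b o hu with ho | ho
    · rw [prod_dist, Nat.dist_eq_sub_of_le_right (by omega : (o : ℕ) ≤ (j : ℕ))]
      split_ifs <;> omega
    · rw [prod_dist, Nat.dist_eq_sub_of_le (by omega : (j : ℕ) ≤ (o : ℕ))]
      by_cases hab : a = bR
      · rw [if_pos hab]; split_ifs <;> omega
      · rw [if_neg hab]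
        by_cases hoq : (o : ℕ) = (qq : ℕ)
        · have hoq' : o = qq := Fin.ext hoq
          subst hoq'
          have hbb : b = bR := col_inj hprop (hu.trans hb.symm)
          rw [if_neg (fun hh => hab (hh.trans hbb))]
          omega
        · split_ifs <;> omega

/-- STEP I: adjacent columns have different missing colors. -/
lemma noAdj (hprop : ∀ u v, ((⊤ : SimpleGraph (Fin m)) □ pathGraph n).Adj u v → c u ≠ c v)
    (hsurj : Function.Surjective c)
    (hinj : Function.Injective (colorCode ((⊤ : SimpleGraph (Fin m)) □ pathGraph n) c))
    (hμ1 : ∀ (j : Fin n) (a : Fin m), c (a, j) ≠ μ j)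
    (hm : 3 ≤ m) :
    ∀ j₀ j₁ : Fin n, (j₀ : ℕ) + 1 = (j₁ : ℕ) → μ j₀ ≠ μ j₁ := by
  classical
  intro j₀ j₁ hj01 heq
  set μ₀ := μ j₀ with hμ₀def
  have hOmem : ∀ (b : Fin m) (o : Fin n), c (b, o) = μ₀ → μ o ≠ μ₀ := by
    intro b o hc h
    exact hμ1 o b (by rw [hc, h])
  have hn2 : 2 ≤ n := by have := j₁.isLt; omega
  set OF : Finset (Fin n) := Finset.univ.filter (fun o => μ o ≠ μ₀) with hOFdef
  have hOF : ∀ o : Fin n, o ∈ OF ↔ μ o ≠ μ₀ := by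
    intro o; simp [hOFdef]
  have hONe : OF.Nonempty := by
    obtain ⟨⟨b, o⟩, hbo⟩ := hsurj μ₀
    exact ⟨o, (hOF o).mpr (hOmem b o hbo)⟩
  have hOj : ∀ o : Fin n, o ∈ OF → (o : ℕ) ≠ (j₀ : ℕ) ∧ (o : ℕ) ≠ (j₁ : ℕ) := by
    intro o ho
    rw [hOF] at ho
    constructor
    · intro hh; exact ho (by rw [show o = j₀ from Fin.ext hh])
    · intro hh; exact ho (by rw [show o = j₁ from Fin.ext hh]; exact heq.symm)
  by_cases hA : ∀ o ∈ OF, (j₀ : ℕ) + 1 < (o : ℕ)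
  · -- Case A : all occurrences far to the right
    set qq : Fin n := OF.min' hONe with hqqdef
    have hqqmem : qq ∈ OF := OF.min'_mem hONe
    have hqqO : μ qq ≠ μ₀ := (hOF qq).mp hqqmem
    have hq2 : 2 ≤ (qq : ℕ) := by have := hA qq hqqmem; omega
    have hqmin : ∀ o : Fin n, (o : ℕ) < (qq : ℕ) → μ o = μ₀ := by
      intro o ho
      by_contra hno
      have := OF.min'_le o ((hOF o).mpr hno)
      rw [Fin.le_def] at this
      omega
    have hocc' : ∀ (b : Fin m) (o : Fin n), c (b, o) = μ₀ → (qq : ℕ) ≤ (o : ℕ) := by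
      intro b o hc
      have := OF.min'_le o ((hOF o).mpr (hOmem b o hc))
      rwa [Fin.le_def] at this
    obtain ⟨bstar, hbstar⟩ := occurs_of_ne_missing hprop hμ1 (Ne.symm hqqO)
    have h1n : 1 < n := by omega
    set X0 : Fin n := ⟨0, by omega⟩ with hX0def
    set X1 : Fin n := ⟨1, h1n⟩ with hX1def
    have hμX0 : μ X0 = μ₀ := hqmin X0 (by simp [hX0def]; omega)
    have hμX1 : μ X1 = μ₀ := hqmin X1 (by simp [hX1def]; omega)
    set γ := c (bstar, X0) with hγdef
    have hγ : γ ≠ μ₀ := by rw [hγdef, ← hμX0]; exact hμ1 X0 bstar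
    obtain ⟨a₁, ha₁⟩ := occurs_of_ne_missing hprop hμ1 (show γ ≠ μ X1 by rw [hμX1]; exact hγ)
    by_cases hbb : a₁ = bstar
    · -- improper along row bstar
      have hadj : ((⊤ : SimpleGraph (Fin m)) □ pathGraph n).Adj (bstar, X0) (bstar, X1) := by
        rw [SimpleGraph.boxProd_adj]
        right
        exact ⟨SimpleGraph.pathGraph_adj.mpr (Or.inl rfl), rfl⟩
      rw [hbb] at ha₁
      exact hprop _ _ hadj (by rw [← hγdef]; exact ha₁.symm)
    · have d0 : setDist ((⊤ : SimpleGraph (Fin m)) □ pathGraph n) (bstar, X0) (c ⁻¹' {μ₀})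
          = ((qq : ℕ) - (X0 : ℕ)) + 0 := by
        rw [runA hprop hbstar hocc' (by simp [hX0def]; omega), if_pos rfl]
      have d1 : setDist ((⊤ : SimpleGraph (Fin m)) □ pathGraph n) (a₁, X1) (c ⁻¹' {μ₀})
          = ((qq : ℕ) - (X1 : ℕ)) + 1 := by
        rw [runA hprop hbstar hocc' (by simp [hX1def]; omega), if_neg hbb]
      have heqd : setDist ((⊤ : SimpleGraph (Fin m)) □ pathGraph n) (bstar, X0) (c ⁻¹' {μ₀})
          = setDist ((⊤ : SimpleGraph (Fin m)) □ pathGraph n) (a₁, X1) (c ⁻¹' {μ₀}) := by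
        rw [d0, d1]
        simp [hX0def, hX1def]
        omega
      have := key1 hprop hsurj hinj hμ1 (by rw [ha₁, ← hγdef]) (hμX0.trans hμX1.symm)
        (by rw [hμX0]; exact heqd)
      have : X0 = X1 := congrArg Prod.snd this
      rw [hX0def, hX1def] at this
      exact absurd (congrArg Fin.val this) (by simp)
  · by_cases hB : ∀ o ∈ OF, (o : ℕ) < (j₀ : ℕ)
    · -- Case B : all occurrences far to the left
      set pp : Fin n := OF.max' hONe with hppdef
      have hppmem : pp ∈ OF := OF.max'_mem hONe
      have hppO : μ pp ≠ μ₀ := (hOF pp).mp hppmem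
      have hpj : (pp : ℕ) < (j₀ : ℕ) := hB pp hppmem
      have hjn : (j₀ : ℕ) + 1 ≤ n - 1 := by have := j₁.isLt; omega
      have hqmax : ∀ o : Fin n, (pp : ℕ) < (o : ℕ) → μ o = μ₀ := by
        intro o ho
        by_contra hno
        have := OF.le_max' o ((hOF o).mpr hno)
        rw [Fin.le_def] at this
        omega
      have hocc' : ∀ (b : Fin m) (o : Fin n), c (b, o) = μ₀ → (o : ℕ) ≤ (pp : ℕ) := by
        intro b o hc
        have := OF.le_max' o ((hOF o).mpr (hOmem b o hc))
        rwa [Fin.le_def] at this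
      obtain ⟨bstar, hbstar⟩ := occurs_of_ne_missing hprop hμ1 (Ne.symm hppO)
      set Y1 : Fin n := ⟨n - 1, by omega⟩ with hY1def
      set Y0 : Fin n := ⟨n - 2, by omega⟩ with hY0def
      have hμY1 : μ Y1 = μ₀ := hqmax Y1 (by simp [hY1def]; omega)
      have hμY0 : μ Y0 = μ₀ := hqmax Y0 (by simp [hY0def]; omega)
      set γ := c (bstar, Y1) with hγdef
      have hγ : γ ≠ μ₀ := by rw [hγdef, ← hμY1]; exact hμ1 Y1 bstar
      obtain ⟨a₁, ha₁⟩ := occurs_of_ne_missing hprop hμ1 (show γ ≠ μ Y0 by rw [hμY0]; exact hγ)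
      by_cases hbb : a₁ = bstar
      · have hadj : ((⊤ : SimpleGraph (Fin m)) □ pathGraph n).Adj (bstar, Y0) (bstar, Y1) := by
          rw [SimpleGraph.boxProd_adj]
          right
          refine ⟨SimpleGraph.pathGraph_adj.mpr (Or.inl ?_), rfl⟩
          simp [hY0def, hY1def]
          omega
        rw [hbb] at ha₁
        exact hprop _ _ hadj (ha₁.trans hγdef)
      · have d0 : setDist ((⊤ : SimpleGraph (Fin m)) □ pathGraph n) (bstar, Y1) (c ⁻¹' {μ₀})
            = ((Y1 : ℕ) - (pp : ℕ)) + 0 := by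
          rw [runB hprop hbstar hocc' (by simp [hY1def]; omega), if_pos rfl]
        have d1 : setDist ((⊤ : SimpleGraph (Fin m)) □ pathGraph n) (a₁, Y0) (c ⁻¹' {μ₀})
            = ((Y0 : ℕ) - (pp : ℕ)) + 1 := by
          rw [runB hprop hbstar hocc' (by simp [hY0def]; omega), if_neg hbb]
        have heqd : setDist ((⊤ : SimpleGraph (Fin m)) □ pathGraph n) (bstar, Y1) (c ⁻¹' {μ₀})
            = setDist ((⊤ : SimpleGraph (Fin m)) □ pathGraph n) (a₁, Y0) (c ⁻¹' {μ₀}) := by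
          rw [d0, d1]
          simp [hY0def, hY1def]
          omega
        have := key1 hprop hsurj hinj hμ1 (by rw [ha₁, ← hγdef]) (hμY1.trans hμY0.symm)
          (by rw [hμY1]; exact heqd)
        have : Y1 = Y0 := congrArg Prod.snd this
        rw [hY1def, hY0def] at this
        have := congrArg Fin.val this
        simp at this
        omega
    · -- Case C : occurrences on both sides
      push_neg at hA hB
      obtain ⟨oL, hoLmem, hoLle⟩ := hA
      obtain ⟨oR, hoRmem, hoRge⟩ := hB
      have hoLlt : (oL : ℕ) < (j₀ : ℕ) := by
        have := hOj oL hoLmem; omega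
      have hoRgt : (j₀ : ℕ) + 1 < (oR : ℕ) := by
        have := hOj oR hoRmem; omega
      set OL : Finset (Fin n) := OF.filter (fun o => (o : ℕ) < (j₀ : ℕ)) with hOLdef
      set OR : Finset (Fin n) := OF.filter (fun o => (j₀ : ℕ) + 1 < (o : ℕ)) with hORdef
      have hOLne : OL.Nonempty := ⟨oL, Finset.mem_filter.mpr ⟨hoLmem, hoLlt⟩⟩
      have hORne : OR.Nonempty := ⟨oR, Finset.mem_filter.mpr ⟨hoRmem, hoRgt⟩⟩
      set pp : Fin n := OL.max' hOLne with hppdef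
      set qq : Fin n := OR.min' hORne with hqqdef
      have hppmem := Finset.mem_filter.mp (OL.max'_mem hOLne)
      have hqqmem := Finset.mem_filter.mp (OR.min'_mem hORne)
      have hppO : μ pp ≠ μ₀ := (hOF pp).mp hppmem.1
      have hqqO : μ qq ≠ μ₀ := (hOF qq).mp hqqmem.1
      have hpq : (pp : ℕ) + 3 ≤ (qq : ℕ) := by
        have h1 := hppmem.2; have h2 := hqqmem.2; omega
      have hmid : ∀ o : Fin n, (pp : ℕ) < (o : ℕ) → (o : ℕ) < (qq : ℕ) → μ o = μ₀ := by
        intro o h1 h2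
        by_contra hno
        have hoOF : o ∈ OF := (hOF o).mpr hno
        have hoj := hOj o hoOF
        rcases Nat.lt_or_ge (o : ℕ) (j₀ : ℕ) with h | h
        · have := OL.le_max' o (Finset.mem_filter.mpr ⟨hoOF, h⟩)
          rw [Fin.le_def] at this
          omega
        · have h' : (j₀ : ℕ) + 1 < (o : ℕ) := by omega
          have := OR.min'_le o (Finset.mem_filter.mpr ⟨hoOF, h'⟩)
          rw [Fin.le_def] at this
          omega
      have hocc' : ∀ (b : Fin m) (o : Fin n), c (b, o) = μ₀ →
          (o : ℕ) ≤ (pp : ℕ) ∨ (qq : ℕ) ≤ (o : ℕ) := by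
        intro b o hc
        by_contra hcon
        push_neg at hcon
        exact hOmem b o hc (hmid o (by omega) (by omega))
      obtain ⟨bL, hbL⟩ := occurs_of_ne_missing hprop hμ1 (Ne.symm hppO)
      obtain ⟨bR, hbR⟩ := occurs_of_ne_missing hprop hμ1 (Ne.symm hqqO)
      set y1 : Fin n := ⟨(pp : ℕ) + 1, by have := j₀.isLt; omega⟩ with hy1def
      set y2 : Fin n := ⟨(qq : ℕ) - 1, by have := qq.isLt; omega⟩ with hy2def
      have hμy1 : μ y1 = μ₀ := hmid y1 (by simp [hy1def]) (by simp [hy1def]; omega)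
      have hμy2 : μ y2 = μ₀ := hmid y2 (by simp [hy2def]; omega) (by simp [hy2def]; omega)
      have claim : ∀ γ : Fin (m + 1), γ ≠ μ₀ → γ = c (bL, y1) ∨ γ = c (bR, y2) := by
        intro γ hγ
        obtain ⟨a1, ha1⟩ := occurs_of_ne_missing hprop hμ1
          (show γ ≠ μ y1 by rw [hμy1]; exact hγ)
        obtain ⟨a2, ha2⟩ := occurs_of_ne_missing hprop hμ1
          (show γ ≠ μ y2 by rw [hμy2]; exact hγ)
        by_cases h1 : a1 = bL
        · left; rw [← ha1, h1]
        · by_cases h2 : a2 = bR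
          · right; rw [← ha2, h2]
          · exfalso
            have d1 : setDist ((⊤ : SimpleGraph (Fin m)) □ pathGraph n) (a1, y1) (c ⁻¹' {μ₀})
                = 1 + 1 := by
              rw [runC1 hprop hbL hocc' (by simp [hy1def]) (by simp [hy1def]; omega), if_neg h1]
            have d2 : setDist ((⊤ : SimpleGraph (Fin m)) □ pathGraph n) (a2, y2) (c ⁻¹' {μ₀})
                = 1 + 1 := by
              rw [runC2 hprop hbR hocc' (by simp [hy2def]; omega) (by simp [hy2def]; omega),
                if_neg h2]
            have := key1 hprop hsurj hinj hμ1 (ha1.trans ha2.symm) (hμy1.trans hμy2.symm)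
              (by rw [hμy1, d1, d2])
            have : y1 = y2 := congrArg Prod.snd this
            rw [hy1def, hy2def] at this
            have := congrArg Fin.val this
            simp at this
            omega
      have hsub : (Finset.univ.erase μ₀) ⊆ {c (bL, y1), c (bR, y2)} := by
        intro γ hγ
        rcases claim γ (Finset.ne_of_mem_erase hγ) with h | h <;> simp [h]
      have hcard1 := Finset.card_le_card hsub
      have hcard2 : ((Finset.univ : Finset (Fin (m + 1))).erase μ₀).card = m := by
        rw [Finset.card_erase_of_mem (Finset.mem_univ _), Finset.card_univ, Fintype.card_fin]
        omega
      have hcard3 : ({c (bL, y1), c (bR, y2)} : Finset (Fin (m + 1))).card ≤ 2 :=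
        le_trans (Finset.card_insert_le _ _) (by simp)
      omega

end Main

theorem stmt9' (m n : ℕ) (hm : 3 ≤ m) (hn : 2 ≤ n)
    (h : ∃ c : Fin m × Fin n → Fin (m + 1),
      IsLocatingColoring ((⊤ : SimpleGraph (Fin m)) □ pathGraph n) c) :
    n ≤ m + 1 := by
  obtain ⟨c, hsurj, hprop, hinj⟩ := h
  choose μ hμ1 using fun j => exists_missing (c := c) hprop j
  have hno := noAdj hprop hsurj hinj hμ1 hm
  have hdom : ∀ j : Fin n, ∃ r : Fin m,
      setDist ((⊤ : SimpleGraph (Fin m)) □ pathGraph n) (r, j) (c ⁻¹' {μ j}) = 1 := by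
    intro j
    have hnb : ∃ j' : Fin n, Nat.dist (j : ℕ) (j' : ℕ) = 1 ∧ μ j ≠ μ j' := by
      by_cases hc1 : (j : ℕ) + 1 < n
      · refine ⟨⟨(j : ℕ) + 1, hc1⟩, ?_, hno j _ rfl⟩
        simp only [Fin.val_mk]
        rw [Nat.dist_eq_sub_of_le (by omega)]
        omega
      · have hj1 : 1 ≤ (j : ℕ) := by have := j.isLt; omega
        refine ⟨⟨(j : ℕ) - 1, by omega⟩, ?_, ?_⟩
        · simp only [Fin.val_mk]
          rw [Nat.dist_eq_sub_of_le_right (by omega)]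
          omega
        · exact (hno ⟨(j : ℕ) - 1, by omega⟩ j (by simp only [Fin.val_mk]; omega)).symm
    obtain ⟨j', hdist, hne⟩ := hnb
    obtain ⟨r, hr⟩ := occurs_of_ne_missing hprop hμ1 hne
    refine ⟨r, le_antisymm ?_ (sd_pos hsurj (hμ1 j r))⟩
    refine le_trans (setDist_le' _ (show (r, j') ∈ c ⁻¹' {μ j} from hr)) ?_
    rw [prod_dist, hdist, if_pos rfl]
  choose w hw using hdom
  have hfi : Function.Injective (fun j : Fin n => c (w j, j)) := by
    intro j j' hjj
    exact congrArg Prod.snd (key2 hprop hsurj hinj hμ1 hjj (hw j) (hw j'))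
  have := Fintype.card_le_of_injective _ hfi
  simpa using this

/-- For `m ≥ 3` and `n ≥ 2`, if `K_m □ P_n` admits a locating
`(m+1)`-coloring, then `n ≤ m + 1`. -/
theorem stmt9 (m n : ℕ) (hm : 3 ≤ m) (hn : 2 ≤ n)
    (h : ∃ c : Fin m × Fin n → Fin (m + 1),
      IsLocatingColoring ((⊤ : SimpleGraph (Fin m)) □ pathGraph n) c) :
    n ≤ m + 1 := by
  exact stmt9' m n hm hn h
end
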